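/- Let T₁, T₂ be commuting invertible bounded operators on a Hilbert space, and suppose h₁ is a T₁-invariant inner product (equivalent to the original). If the commutant of T₁ is abelian (T₁ is multiplicity free), then h₁ is also T₂-invariant. -/

import Mathlib

open ContinuousLinearMap
local notation "⟪" x ", " y "⟫" => @inner ℂ _ _ x y

set_option synthInstance.maxHeartbeats 1000000
set_option maxHeartbeats 3000000

/-- A self-adjoint, nonnegative, invertible operator whose positive and negative powers are
uniformly bounded in norm is the identity. -/
private lemma aux_power_bounded_positive_eq_one
    {ℍ : Type*} [NormedAddCommGroup ℍ] [InnerProductSpace ℂ ℍ] [CompleteSpace ℍ]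
    (S S' : ℍ →L[ℂ] ℍ) (hSS' : S * S' = 1) (hS'S : S' * S = 1)
    (hpos : (0:ℍ →L[ℂ] ℍ) ≤ S) (M : ℝ)
    (hb : ∀ n : ℕ, ‖S ^ n‖ ≤ M) (hb' : ∀ n : ℕ, ‖S' ^ n‖ ≤ M) :
    S = 1 := by
  have hsa : IsSelfAdjoint S := IsSelfAdjoint.of_nonneg hpos
  have hsa' : IsSelfAdjoint S' := by
    have h1 : star S' * S = 1 := by
      have h0 : star S' * star S = 1 := by rw [← star_mul, hSS', star_one]
      rwa [hsa.star_eq] at h0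
    calc star S' = star S' * (S * S') := by rw [hSS', mul_one]
      _ = (star S' * S) * S' := by rw [mul_assoc]
      _ = S' := by rw [h1, one_mul]
  -- norm bound one for a self-adjoint power-bounded operator
  have key : ∀ T : ℍ →L[ℂ] ℍ, IsSelfAdjoint T → (∀ n : ℕ, ‖T ^ n‖ ≤ M) → ‖T‖ ≤ 1 := by
    intro T hT hbT
    by_contra h
    push_neg at h
    obtain ⟨n, hn⟩ := pow_unbounded_of_one_lt M h
    have h2 : ‖T ^ 2 ^ n‖ = ‖T‖ ^ 2 ^ n := by
      have h2' := congrArg NNReal.toReal (hT.nnnorm_pow_two_pow n)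
      simpa [NNReal.coe_pow] using h2'
    have h3 : ‖T‖ ^ n ≤ ‖T‖ ^ 2 ^ n := pow_le_pow_right₀ h.le (Nat.lt_two_pow_self (n := n)).le
    have := hbT (2 ^ n)
    rw [h2] at this
    linarith
  have hS1 : ‖S‖ ≤ 1 := key S hsa hb
  have hS'1 : ‖S'‖ ≤ 1 := key S' hsa' hb'
  -- S is an isometry
  have hiso : ∀ x : ℍ, ‖S x‖ = ‖x‖ := by
    intro x
    refine le_antisymm ?_ ?_
    · calc ‖S x‖ ≤ ‖S‖ * ‖x‖ := le_opNorm S x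
        _ ≤ 1 * ‖x‖ := by gcongr
        _ = ‖x‖ := one_mul _
    · calc ‖x‖ = ‖S' (S x)‖ := by
            have : (S' * S) x = x := by rw [hS'S]; rfl
            rw [ContinuousLinearMap.mul_apply] at this; rw [this]
        _ ≤ ‖S'‖ * ‖S x‖ := le_opNorm S' (S x)
        _ ≤ 1 * ‖S x‖ := by gcongr
        _ = ‖S x‖ := one_mul _
  -- S * S = 1
  have hadj : adjoint S = S := by rw [← star_eq_adjoint, hsa.star_eq]
  have hS2 : S * S = 1 := by
    rw [← sub_eq_zero]
    have hz : ∀ x : ℍ, ⟪((S * S - 1 : ℍ →L[ℂ] ℍ) : ℍ →ₗ[ℂ] ℍ) x, x⟫ = 0 := by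
      intro x
      have h1 : ⟪S (S x), x⟫ = ⟪S x, S x⟫ := by
        calc ⟪S (S x), x⟫ = ⟪adjoint S (S x), x⟫ := by rw [hadj]
          _ = ⟪S x, S x⟫ := adjoint_inner_left S x (S x)
      have h2 : (⟪S x, S x⟫ : ℂ) = ⟪x, x⟫ := by
        rw [inner_self_eq_norm_sq_to_K, inner_self_eq_norm_sq_to_K, hiso]
      simp only [ContinuousLinearMap.coe_coe, sub_apply, ContinuousLinearMap.mul_apply, ContinuousLinearMap.one_apply,
        inner_sub_left, h1, h2, sub_self]
    have := (inner_map_self_eq_zero ((S * S - 1 : ℍ →L[ℂ] ℍ) : ℍ →ₗ[ℂ] ℍ)).mp hz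
    exact ContinuousLinearMap.coe_injective (by rw [this]; rfl)
  -- conclude S = 1 pointwise
  ext x
  have hx : (S * S) x = x := by rw [hS2]; rfl
  rw [ContinuousLinearMap.mul_apply] at hx
  have hw : S (S x - x) = -(S x - x) := by rw [map_sub, hx]; abel
  have hposS := (nonneg_iff_isPositive S).mp hpos
  have h6 := hposS.inner_nonneg_left (S x - x)
  rw [hw, inner_neg_left, inner_self_eq_norm_sq_to_K] at h6
  norm_cast at h6
  rw [RCLike.ofReal_nonneg] at h6
  have h7 : ‖S x - x‖ = 0 := by nlinarith [norm_nonneg (S x - x)]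
  have h8 := sub_eq_zero.mp (norm_eq_zero.mp h7)
  simpa using h8

private lemma aux_norm_conj_bound {A : Type*} [NonUnitalSeminormedRing A] (a x b y : A) :
    ‖(a * (x * b)) * y‖ ≤ ‖a‖ * (‖x‖ * (‖b‖ * ‖y‖)) := by
  calc ‖(a * (x * b)) * y‖ ≤ ‖a * (x * b)‖ * ‖y‖ := norm_mul_le _ _
    _ ≤ (‖a‖ * ‖x * b‖) * ‖y‖ := by gcongr; exact norm_mul_le _ _
    _ ≤ (‖a‖ * (‖x‖ * ‖b‖)) * ‖y‖ := by gcongr; exact norm_mul_le _ _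
    _ = ‖a‖ * (‖x‖ * (‖b‖ * ‖y‖)) := by ring

/-- Let `T₁, T₂` be commuting invertible bounded operators, both uniformly bounded, and let
`h₁(x,y) = ⟪P₁x, y⟫` be a `T₁`-invariant inner product equivalent to the original one (`P₁`
bounded positive invertible). If the commutant of `T₁` is abelian (`T₁` is multiplicity
free), then `h₁` is also `T₂`-invariant. -/
theorem multiplicity_free_invariant_metric_is_invariant_for_commuting
    {ℍ : Type*} [NormedAddCommGroup ℍ] [InnerProductSpace ℂ ℍ] [CompleteSpace ℍ]
    (T₁ T₂ P₁ : ℍ ≃L[ℂ] ℍ) (c : ℝ)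
    (hcomm : T₁ * T₂ = T₂ * T₁)
    (hbd₁ : ∀ k : ℤ, ‖((T₁ ^ k : ℍ ≃L[ℂ] ℍ) : ℍ →L[ℂ] ℍ)‖ ≤ c)
    (hbd₂ : ∀ k : ℤ, ‖((T₂ ^ k : ℍ ≃L[ℂ] ℍ) : ℍ →L[ℂ] ℍ)‖ ≤ c)
    (hP₁ : (P₁ : ℍ →L[ℂ] ℍ).IsPositive)
    (hinv₁ : ∀ x y : ℍ, ⟪P₁ (T₁ x), T₁ y⟫ = ⟪P₁ x, y⟫)
    -- the commutant of T₁ is abelian (T₁ is multiplicity free)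
    (habelian : ∀ S S' : ℍ →L[ℂ] ℍ,
      S ∘L (T₁ : ℍ →L[ℂ] ℍ) = (T₁ : ℍ →L[ℂ] ℍ) ∘L S →
      S' ∘L (T₁ : ℍ →L[ℂ] ℍ) = (T₁ : ℍ →L[ℂ] ℍ) ∘L S' →
      S ∘L S' = S' ∘L S) :
    ∀ x y : ℍ, ⟪P₁ (T₂ x), T₂ y⟫ = ⟪P₁ x, y⟫ := by
  -- abbreviations
  set t : ℍ →L[ℂ] ℍ := (T₁ : ℍ →L[ℂ] ℍ) with htdef
  set t' : ℍ →L[ℂ] ℍ := (T₁.symm : ℍ →L[ℂ] ℍ) with ht'def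
  set u : ℍ →L[ℂ] ℍ := (T₂ : ℍ →L[ℂ] ℍ) with hudef
  set u' : ℍ →L[ℂ] ℍ := (T₂.symm : ℍ →L[ℂ] ℍ) with hu'def
  set p : ℍ →L[ℂ] ℍ := (P₁ : ℍ →L[ℂ] ℍ) with hpdef
  set p' : ℍ →L[ℂ] ℍ := (P₁.symm : ℍ →L[ℂ] ℍ) with hp'def
  have htt' : t * t' = 1 := by ext z; simp [mul_apply, htdef, ht'def]
  have ht't : t' * t = 1 := by ext z; simp [mul_apply, htdef, ht'def]
  have huu' : u * u' = 1 := by ext z; simp [mul_apply, hudef, hu'def]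
  have hu'u : u' * u = 1 := by ext z; simp [mul_apply, hudef, hu'def]
  have hpp' : p * p' = 1 := by ext z; simp [mul_apply, hpdef, hp'def]
  have hp'p : p' * p = 1 := by ext z; simp [mul_apply, hpdef, hp'def]
  -- generic cancellation helper
  have K : ∀ (a b : ℍ →L[ℂ] ℍ), a * b = 1 → ∀ x : ℍ →L[ℂ] ℍ, a * (b * x) = x :=
    fun a b h x => by rw [← mul_assoc, h, one_mul]
  -- star facts
  have hstar_t : star t' * star t = 1 := by rw [← star_mul, htt', star_one]
  have hstar_t' : star t * star t' = 1 := by rw [← star_mul, ht't, star_one]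
  have hstar_u : star u' * star u = 1 := by rw [← star_mul, huu', star_one]
  have hstar_u' : star u * star u' = 1 := by rw [← star_mul, hu'u, star_one]
  have hstarp : star p = p := hP₁.isSelfAdjoint.star_eq
  have hstarp' : star p' = p' := by
    have h1 : star p' * p = 1 := by
      conv_lhs => rw [← hstarp]
      rw [← star_mul, hpp', star_one]
    calc star p' = star p' * (p * p') := by rw [hpp', mul_one]
      _ = (star p' * p) * p' := by rw [mul_assoc]
      _ = p' := by rw [h1, one_mul]
  -- the invariance relation as an operator identity
  have e₁ : star t * (p * t) = p := by
    refine ContinuousLinearMap.ext fun z => ext_inner_right ℂ fun w => ?_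
    calc ⟪(star t * (p * t)) z, w⟫ = ⟪adjoint t (p (t z)), w⟫ := by
          rw [ContinuousLinearMap.mul_apply, ContinuousLinearMap.mul_apply, star_eq_adjoint]
      _ = ⟪p (t z), t w⟫ := adjoint_inner_left t w (p (t z))
      _ = ⟪p z, w⟫ := hinv₁ z w
  have hA : p * t = star t' * p := by
    have h2 : star t' * (star t * (p * t)) = star t' * p := by rw [e₁]
    rwa [K _ _ hstar_t] at h2
  have hT : t * p' = p' * star t' := by
    have h2 : p' * ((p * t) * p') = p' * ((star t' * p) * p') := by rw [hA]
    calc t * p' = p' * ((p * t) * p') := by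
          rw [mul_assoc p t p', K _ _ hp'p]
      _ = p' * ((star t' * p) * p') := h2
      _ = p' * star t' := by rw [mul_assoc, hpp', mul_one]
  -- commutation relations coming from T₁ T₂ = T₂ T₁
  have hc' : t * u = u * t := congrArg (fun (E : ℍ ≃L[ℂ] ℍ) => (E : ℍ →L[ℂ] ℍ)) hcomm
  have ht'u : t' * u = u * t' := by
    have h : u * t' = t' * u := by
      calc u * t' = t' * (t * (u * t')) := by rw [K _ _ ht't]
        _ = t' * ((t * u) * t') := by rw [← mul_assoc t u t']
        _ = t' * ((u * t) * t') := by rw [hc']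
        _ = t' * (u * (t * t')) := by rw [mul_assoc u t t']
        _ = t' * u := by rw [htt', mul_one]
    exact h.symm
  -- inverse-commutation helper
  have Kinv : ∀ (a b w : ℍ →L[ℂ] ℍ), a * b = 1 → b * a = 1 → a * w = w * a → b * w = w * b := by
    intro a b w hab hba h
    calc b * w = b * (w * (a * b)) := by rw [hab, mul_one]
      _ = b * ((w * a) * b) := by rw [← mul_assoc w a b]
      _ = b * ((a * w) * b) := by rw [← h]
      _ = b * (a * (w * b)) := by rw [mul_assoc a w b]
      _ = w * b := by rw [K _ _ hba]
  have hsu : star u * star t' = star t' * star u := by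
    have h := congrArg star ht'u
    rw [star_mul, star_mul] at h
    exact h
  -- q commutes with t
  set q : ℍ →L[ℂ] ℍ := p' * (star u * p) with hqdef
  have hqt : q * t = t * q := by
    calc q * t = p' * (star u * (p * t)) := by rw [hqdef]; simp only [mul_assoc]
      _ = p' * (star u * (star t' * p)) := by rw [hA]
      _ = p' * ((star u * star t') * p) := by rw [← mul_assoc (star u) (star t') p]
      _ = p' * ((star t' * star u) * p) := by rw [hsu]
      _ = (p' * star t') * (star u * p) := by simp only [mul_assoc]
      _ = (t * p') * (star u * p) := by rw [← hT]
      _ = t * q := by rw [hqdef]; simp only [mul_assoc]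
  -- the commutant of t is abelian, so q commutes with u
  have huq : u * q = q * u := by
    have h := habelian u q (by rw [← mul_def, ← mul_def]; exact hc'.symm)
      (by rw [← mul_def, ← mul_def]; exact hqt)
    rw [← mul_def, ← mul_def] at h
    exact h
  set q' : ℍ →L[ℂ] ℍ := p' * (star u' * p) with hq'def
  have hqq' : q * q' = 1 := by
    calc q * q' = p' * (star u * (p * (p' * (star u' * p)))) := by
          rw [hqdef, hq'def]; simp only [mul_assoc]
      _ = p' * (star u * (star u' * p)) := by rw [K _ _ hpp']
      _ = p' * ((star u * star u') * p) := by rw [← mul_assoc (star u) (star u') p]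
      _ = p' * p := by rw [hstar_u', one_mul]
      _ = 1 := hp'p
  have hq'q : q' * q = 1 := by
    calc q' * q = p' * (star u' * (p * (p' * (star u * p)))) := by
          rw [hqdef, hq'def]; simp only [mul_assoc]
      _ = p' * (star u' * (star u * p)) := by rw [K _ _ hpp']
      _ = p' * ((star u' * star u) * p) := by rw [← mul_assoc (star u') (star u) p]
      _ = p' * p := by rw [hstar_u, one_mul]
      _ = 1 := hp'p
  have hu'q : u' * q = q * u' := Kinv u u' q huu' hu'u huq
  have hq'u : q' * u = u * q' := Kinv q q' u hqq' hq'q huq.symm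
  have hq'u' : q' * u' = u' * q' := (Kinv u u' q' huu' hu'u hq'u.symm).symm
  set r : ℍ →L[ℂ] ℍ := q * u with hrdef
  set r' : ℍ →L[ℂ] ℍ := q' * u' with hr'def
  have hrr' : r * r' = 1 := by
    calc r * r' = q * (u * (q' * u')) := by rw [hrdef, hr'def]; simp only [mul_assoc]
      _ = q * ((u * q') * u') := by rw [← mul_assoc u q' u']
      _ = q * ((q' * u) * u') := by rw [← hq'u]
      _ = q * (q' * (u * u')) := by rw [mul_assoc q' u u']
      _ = q * q' := by rw [huu', mul_one]
      _ = 1 := hqq'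
  have hr'r : r' * r = 1 := by
    calc r' * r = q' * (u' * (q * u)) := by rw [hrdef, hr'def]; simp only [mul_assoc]
      _ = q' * ((u' * q) * u) := by rw [← mul_assoc u' q u]
      _ = q' * ((q * u') * u) := by rw [hu'q]
      _ = q' * (q * (u' * u)) := by rw [mul_assoc q u' u]
      _ = q' * q := by rw [hu'u, mul_one]
      _ = 1 := hq'q
  -- power formulas
  have hqpow : ∀ n : ℕ, q ^ n = p' * ((star u) ^ n * p) := by
    intro n
    induction n with
    | zero => rw [pow_zero, pow_zero, one_mul, hp'p]
    | succ n ih =>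
        rw [pow_succ, ih, pow_succ]
        calc (p' * ((star u) ^ n * p)) * q
            = p' * ((star u) ^ n * (p * (p' * (star u * p)))) := by
              rw [hqdef]; simp only [mul_assoc]
          _ = p' * ((star u) ^ n * (star u * p)) := by rw [K _ _ hpp']
          _ = p' * (((star u) ^ n * star u) * p) := by
              rw [← mul_assoc ((star u) ^ n) (star u) p]
  have hq'pow : ∀ n : ℕ, q' ^ n = p' * ((star u') ^ n * p) := by
    intro n
    induction n with
    | zero => rw [pow_zero, pow_zero, one_mul, hp'p]
    | succ n ih =>
        rw [pow_succ, ih, pow_succ]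
        calc (p' * ((star u') ^ n * p)) * q'
            = p' * ((star u') ^ n * (p * (p' * (star u' * p)))) := by
              rw [hq'def]; simp only [mul_assoc]
          _ = p' * ((star u') ^ n * (star u' * p)) := by rw [K _ _ hpp']
          _ = p' * (((star u') ^ n * star u') * p) := by
              rw [← mul_assoc ((star u') ^ n) (star u') p]
  have hrpow : ∀ n : ℕ, r ^ n = (p' * ((star u) ^ n * p)) * u ^ n := by
    intro n
    have hcq : Commute q u := huq.symm
    rw [hrdef, hcq.mul_pow, hqpow]
  have hr'pow : ∀ n : ℕ, r' ^ n = (p' * ((star u') ^ n * p)) * u' ^ n := by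
    intro n
    have hcq : Commute q' u' := hq'u'
    rw [hr'def, hcq.mul_pow, hq'pow]
  -- uniform bounds
  have hcpow : ∀ (E : ℍ ≃L[ℂ] ℍ) (n : ℕ),
      ((E ^ n : ℍ ≃L[ℂ] ℍ) : ℍ →L[ℂ] ℍ) = (E : ℍ →L[ℂ] ℍ) ^ n := by
    intro E n
    induction n with
    | zero => rfl
    | succ n ih => rw [pow_succ, pow_succ, ← ih]; rfl
  have hbu : ∀ n : ℕ, ‖u ^ n‖ ≤ c := by
    intro n
    have h := hbd₂ (n : ℤ)
    rw [zpow_natCast, hcpow] at h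
    exact h
  have hbu' : ∀ n : ℕ, ‖u' ^ n‖ ≤ c := by
    intro n
    have h := hbd₂ (-(n : ℤ))
    rw [zpow_neg, zpow_natCast, ← inv_pow, hcpow] at h
    exact h
  have hbsu : ∀ n : ℕ, ‖(star u) ^ n‖ ≤ c := by
    intro n; rw [← star_pow, norm_star]; exact hbu n
  have hbsu' : ∀ n : ℕ, ‖(star u') ^ n‖ ≤ c := by
    intro n; rw [← star_pow, norm_star]; exact hbu' n
  have hc0 : 0 ≤ c := le_trans (norm_nonneg _) (hbd₂ 0)
  set M : ℝ := ‖p'‖ * (c * (‖p‖ * c)) with hM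
  have hrb : ∀ n : ℕ, ‖r ^ n‖ ≤ M := by
    intro n
    rw [hrpow n, hM]
    refine le_trans (aux_norm_conj_bound p' ((star u) ^ n) p (u ^ n)) ?_
    gcongr <;> first | exact hc0 | exact hbsu n | exact hbu n | positivity
  have hr'b : ∀ n : ℕ, ‖r' ^ n‖ ≤ M := by
    intro n
    rw [hr'pow n, hM]
    refine le_trans (aux_norm_conj_bound p' ((star u') ^ n) p (u' ^ n)) ?_
    gcongr <;> first | exact hc0 | exact hbsu' n | exact hbu' n | positivity
  -- square root of p
  have hp0 : (0 : ℍ →L[ℂ] ℍ) ≤ p := (nonneg_iff_isPositive p).mpr hP₁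
  set f : ℍ →L[ℂ] ℍ := CFC.sqrt p with hfdef
  have hff : f * f = p := CFC.sqrt_mul_sqrt_self p hp0
  have hf0 : (0 : ℍ →L[ℂ] ℍ) ≤ f := CFC.sqrt_nonneg (a := p)
  have hstarf : star f = f := (IsSelfAdjoint.of_nonneg hf0).star_eq
  have hfp' : f * p' = p' * f := by
    have hfp : f * p = p * f := by
      conv_lhs => rw [← hff]
      conv_rhs => rw [← hff]
      rw [mul_assoc]
    exact (Kinv p p' f hpp' hp'p hfp.symm).symm
  set g : ℍ →L[ℂ] ℍ := p' * f with hgdef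
  have hfg : f * g = 1 := by
    calc f * g = (f * p') * f := by rw [hgdef, mul_assoc]
      _ = (p' * f) * f := by rw [hfp']
      _ = p' * (f * f) := by rw [mul_assoc]
      _ = 1 := by rw [hff, hp'p]
  have hgf : g * f = 1 := by rw [hgdef, mul_assoc, hff, hp'p]
  have hstarg : star g = g := by rw [hgdef, star_mul, hstarf, hstarp', hfp']
  have swapfp' : ∀ x : ℍ →L[ℂ] ℍ, f * (p' * x) = p' * (f * x) := fun x => by
    rw [← mul_assoc, hfp', mul_assoc]
  -- the conjugated operator S and its inverse
  set S : ℍ →L[ℂ] ℍ := f * (r * g) with hSdef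
  set S' : ℍ →L[ℂ] ℍ := f * (r' * g) with hS'def
  have hSS' : S * S' = 1 := by
    calc S * S' = f * (r * ((g * f) * (r' * g))) := by
          rw [hSdef, hS'def]; simp only [mul_assoc]
      _ = f * (r * (r' * g)) := by rw [hgf, one_mul]
      _ = f * ((r * r') * g) := by rw [← mul_assoc r r' g]
      _ = f * g := by rw [hrr', one_mul]
      _ = 1 := hfg
  have hS'S : S' * S = 1 := by
    calc S' * S = f * (r' * ((g * f) * (r * g))) := by
          rw [hSdef, hS'def]; simp only [mul_assoc]
      _ = f * (r' * (r * g)) := by rw [hgf, one_mul]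
      _ = f * ((r' * r) * g) := by rw [← mul_assoc r' r g]
      _ = f * g := by rw [hr'r, one_mul]
      _ = 1 := hfg
  have hSpow : ∀ n : ℕ, S ^ n = f * (r ^ n * g) := by
    intro n
    induction n with
    | zero => rw [pow_zero, pow_zero, one_mul, hfg]
    | succ n ih =>
        rw [pow_succ, ih, pow_succ]
        calc (f * (r ^ n * g)) * S = f * (r ^ n * ((g * f) * (r * g))) := by
              rw [hSdef]; simp only [mul_assoc]
          _ = f * (r ^ n * (r * g)) := by rw [hgf, one_mul]
          _ = f * ((r ^ n * r) * g) := by rw [← mul_assoc (r ^ n) r g]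
  have hS'pow : ∀ n : ℕ, S' ^ n = f * (r' ^ n * g) := by
    intro n
    induction n with
    | zero => rw [pow_zero, pow_zero, one_mul, hfg]
    | succ n ih =>
        rw [pow_succ, ih, pow_succ]
        calc (f * (r' ^ n * g)) * S' = f * (r' ^ n * ((g * f) * (r' * g))) := by
              rw [hS'def]; simp only [mul_assoc]
          _ = f * (r' ^ n * (r' * g)) := by rw [hgf, one_mul]
          _ = f * ((r' ^ n * r') * g) := by rw [← mul_assoc (r' ^ n) r' g]
  set M' : ℝ := ‖f‖ * (M * ‖g‖) with hM'
  have hSb : ∀ n : ℕ, ‖S ^ n‖ ≤ M' := by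
    intro n
    rw [hSpow n, hM']
    refine le_trans (norm_mul_le _ _) ?_
    have h1 : ‖r ^ n * g‖ ≤ M * ‖g‖ := by
      refine le_trans (norm_mul_le _ _) ?_
      gcongr
      exact hrb n
    gcongr
  have hS'b : ∀ n : ℕ, ‖S' ^ n‖ ≤ M' := by
    intro n
    rw [hS'pow n, hM']
    refine le_trans (norm_mul_le _ _) ?_
    have h1 : ‖r' ^ n * g‖ ≤ M * ‖g‖ := by
      refine le_trans (norm_mul_le _ _) ?_
      gcongr
      exact hr'b n
    gcongr
  -- S is nonnegative
  have hform : S = star g * ((star u * p) * u) * g := by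
    rw [hstarg, hSdef, hrdef, hqdef, hgdef]
    simp only [mul_assoc]
    rw [swapfp']
  have hS0 : (0 : ℍ →L[ℂ] ℍ) ≤ S := by
    rw [hform]
    exact star_left_conjugate_nonneg (star_left_conjugate_nonneg hp0 u) g
  -- apply the key lemma
  have hS1 : S = 1 := aux_power_bounded_positive_eq_one S S' hSS' hS'S hS0 M' hSb hS'b
  -- recover r = 1 and the operator identity
  have hr1 : r = 1 := by
    have h2 : g * (S * f) = g * (1 * f) := by rw [hS1]
    rw [hSdef] at h2
    calc r = g * ((f * (r * g)) * f) := by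
          simp only [mul_assoc]
          rw [K _ _ hgf, hgf, mul_one]
      _ = g * (1 * f) := h2
      _ = 1 := by rw [one_mul, hgf]
  have hfinal : star u * (p * u) = p := by
    have h2 : p * (q * u) = p * 1 := by rw [← hrdef, hr1]
    rw [hqdef, mul_one] at h2
    calc star u * (p * u) = p * ((p' * (star u * p)) * u) := by
          simp only [mul_assoc]
          rw [K _ _ hpp']
      _ = p := h2
  -- conclude pointwise
  intro x y
  have h := congrArg (fun (F : ℍ →L[ℂ] ℍ) => ⟪F x, y⟫) hfinal
  simp only [ContinuousLinearMap.mul_apply] at h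
  rw [star_eq_adjoint, adjoint_inner_left] at h
  exact h
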